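/- Let d ≥ 1, h(t,x) = (|x| − 1/2)² − t², and let w' be any real-valued function on {(t,x) : x ≠ 0, h(t,x) > 0}. Denote by ∇^α h the Minkowski-raised gradient (∇^0 h = −∂_t h, ∇^i h = ∂_{x_i} h) and by H_{αβ} = ∂_α∂_β h the Hessian. Then at every point with x ≠ 0 and h > 0 one has Σ_{α,β} ∇^α h·∇^β h·( h^{−2}·∂_α h·∂_β h − h^{−1}·H_{αβ} ) − w'·Σ_α ∇^α h·∂_α h = 8 − 4h·w'. In particular, for the choice w' = h^{−1}(2 − A₀|x|^{−1}) with A₀ > 0, this quantity equals 4A₀|x|^{−1} > 0. -/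

import Mathlib

open scoped BigOperators
open scoped RealInnerProductSpace

/-- Coordinate directions in `ℝ × ℝ^d`: `dir 0 = ∂_t`, `dir (i+1) = ∂_{x_i}`. -/
noncomputable def coordDir (d : ℕ) : Fin (d + 1) → ℝ × EuclideanSpace ℝ (Fin d) :=
  Fin.cons ((1 : ℝ), (0 : EuclideanSpace ℝ (Fin d)))
    (fun i => ((0 : ℝ), EuclideanSpace.single i 1))

/-- Minkowski signs: `η = diag(−1,1,…,1)`. -/
def mSign (d : ℕ) : Fin (d + 1) → ℝ := Fin.cons (-1) (fun _ => 1)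

variable {d : ℕ}

lemma hasFDerivAt_norm' (x : EuclideanSpace ℝ (Fin d)) (hx : x ≠ 0) :
    HasFDerivAt (fun y : EuclideanSpace ℝ (Fin d) => ‖y‖) (‖x‖⁻¹ • innerSL ℝ x) x := by
  have hx' : ‖x‖ ≠ 0 := norm_ne_zero_iff.2 hx
  have hn : ‖x‖ ^ 2 ≠ 0 := pow_ne_zero 2 hx'
  have h1 := (Real.hasDerivAt_sqrt hn).comp_hasFDerivAt x
    (hasStrictFDerivAt_norm_sq x).hasFDerivAt
  have hfun : (Real.sqrt ∘ fun y : EuclideanSpace ℝ (Fin d) => ‖y‖ ^ 2)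
      = fun y : EuclideanSpace ℝ (Fin d) => ‖y‖ := by
    ext y; simp [Function.comp, Real.sqrt_sq (norm_nonneg y)]
  rw [hfun] at h1
  have heq : (1 / (2 * Real.sqrt (‖x‖ ^ 2))) • ((2:ℝ) • innerSL ℝ x) = ‖x‖⁻¹ • innerSL ℝ x := by
    rw [Real.sqrt_sq (norm_nonneg x), smul_smul]
    congr 1
    field_simp
  rw [← heq]
  convert! h1 using 2
  ext v
  simp [nsmul_eq_mul]

/-- The first derivative of `h` as a continuous linear map. -/
noncomputable def Dh (d : ℕ) (p : ℝ × EuclideanSpace ℝ (Fin d)) :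
    (ℝ × EuclideanSpace ℝ (Fin d)) →L[ℝ] ℝ :=
  (2 - ‖p.2‖⁻¹) • ((innerSL ℝ p.2).comp (ContinuousLinearMap.snd ℝ ℝ _)) -
    (2 * p.1) • ContinuousLinearMap.fst ℝ ℝ _

lemma Dh_apply (p v : ℝ × EuclideanSpace ℝ (Fin d)) :
    Dh d p v = (2 - ‖p.2‖⁻¹) * ⟪p.2, v.2⟫ - 2 * p.1 * v.1 := by
  simp [Dh]

lemma hasFDerivAt_h (h : ℝ × EuclideanSpace ℝ (Fin d) → ℝ)
    (hdef : ∀ p, h p = (‖p.2‖ - 1/2) ^ 2 - p.1 ^ 2)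
    (p : ℝ × EuclideanSpace ℝ (Fin d)) (hp : p.2 ≠ 0) :
    HasFDerivAt h (Dh d p) p := by
  have hfun : h = fun q => (‖q.2‖ - 1/2) ^ 2 - q.1 ^ 2 := funext hdef
  rw [hfun]
  have h2 : HasFDerivAt (fun q : ℝ × EuclideanSpace ℝ (Fin d) => ‖q.2‖)
      ((‖p.2‖⁻¹ • innerSL ℝ p.2).comp (ContinuousLinearMap.snd ℝ ℝ _)) p :=
    (hasFDerivAt_norm' p.2 hp).comp p hasFDerivAt_snd
  have ha : HasDerivAt (fun r : ℝ => (r - 1/2) ^ 2) (2 * (‖p.2‖ - 1/2)) ‖p.2‖ := by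
    have := (((hasDerivAt_id ‖p.2‖).sub_const (1/2)).pow 2)
    simpa [Pi.pow_def] using this
  have hb : HasDerivAt (fun r : ℝ => r ^ 2) (2 * p.1) p.1 := by
    simpa using hasDerivAt_pow 2 p.1
  have h3 := (ha.comp_hasFDerivAt p h2).sub (hb.comp_hasFDerivAt p hasFDerivAt_fst)
  have h4 : ((fun r : ℝ => (r - 1/2) ^ 2) ∘ fun q : ℝ × EuclideanSpace ℝ (Fin d) => ‖q.2‖)
      = fun q : ℝ × EuclideanSpace ℝ (Fin d) => (‖q.2‖ - 1/2) ^ 2 := rfl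
  have h5 : ((fun r : ℝ => r ^ 2) ∘ (Prod.fst : ℝ × EuclideanSpace ℝ (Fin d) → ℝ))
      = fun q : ℝ × EuclideanSpace ℝ (Fin d) => q.1 ^ 2 := rfl
  rw [h4, h5] at h3
  convert! h3 using 1
  have hr : ‖p.2‖ ≠ 0 := norm_ne_zero_iff.2 hp
  ext v
  · simp [Dh]
  · simp only [Dh, ContinuousLinearMap.sub_apply, ContinuousLinearMap.smul_apply,
      ContinuousLinearMap.coe_comp', Function.comp_apply, ContinuousLinearMap.coe_snd',
      ContinuousLinearMap.coe_fst', innerSL_apply_apply, smul_eq_mul]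
    have hs : 2 * (‖p.2‖ - 1/2) * ‖p.2‖⁻¹ = 2 - ‖p.2‖⁻¹ := by
      field_simp
    rw [← hs]
    ring

lemma fderiv_Dh_apply (p : ℝ × EuclideanSpace ℝ (Fin d)) (hp : p.2 ≠ 0)
    (v u : ℝ × EuclideanSpace ℝ (Fin d)) :
    fderiv ℝ (fun q => Dh d q v) p u =
      (‖p.2‖ ^ 3)⁻¹ * ⟪p.2, u.2⟫ * ⟪p.2, v.2⟫ + (2 - ‖p.2‖⁻¹) * ⟪u.2, v.2⟫
        - 2 * u.1 * v.1 := by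
  have hr : ‖p.2‖ ≠ 0 := norm_ne_zero_iff.2 hp
  have h2 : HasFDerivAt (fun q : ℝ × EuclideanSpace ℝ (Fin d) => ‖q.2‖)
      ((‖p.2‖⁻¹ • innerSL ℝ p.2).comp (ContinuousLinearMap.snd ℝ ℝ _)) p :=
    (hasFDerivAt_norm' p.2 hp).comp p hasFDerivAt_snd
  have hA : HasFDerivAt (fun q : ℝ × EuclideanSpace ℝ (Fin d) => ‖q.2‖⁻¹)
      ((-(‖p.2‖ ^ 2)⁻¹) • ((‖p.2‖⁻¹ • innerSL ℝ p.2).comp (ContinuousLinearMap.snd ℝ ℝ _))) p :=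
    (hasDerivAt_inv hr).comp_hasFDerivAt p h2
  have hC := (hasFDerivAt_const (2:ℝ) p).sub hA
  have hB : HasFDerivAt (fun q : ℝ × EuclideanSpace ℝ (Fin d) => (⟪q.2, v.2⟫ : ℝ))
      ((innerSL ℝ v.2).comp (ContinuousLinearMap.snd ℝ ℝ _)) p := by
    have := ((innerSL ℝ v.2).comp (ContinuousLinearMap.snd ℝ ℝ
      (EuclideanSpace ℝ (Fin d)))).hasFDerivAt (x := p)
    convert this using 1
    ext q
    simp [mul_comm, real_inner_comm]
  have hD : HasFDerivAt (fun q : ℝ × EuclideanSpace ℝ (Fin d) => 2 * q.1 * v.1)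
      ((2 * v.1) • ContinuousLinearMap.fst ℝ ℝ (EuclideanSpace ℝ (Fin d))) p := by
    have := ((2 * v.1) • ContinuousLinearMap.fst ℝ ℝ
      (EuclideanSpace ℝ (Fin d))).hasFDerivAt (x := p)
    convert this using 1
    ext q
    simp
    ring
  have hG := (hC.mul hB).sub hD
  have hfun : (fun q : ℝ × EuclideanSpace ℝ (Fin d) => Dh d q v)
      = fun q => (2 - ‖q.2‖⁻¹) * ⟪q.2, v.2⟫ - 2 * q.1 * v.1 := by
    ext q; rw [Dh_apply]
  rw [hfun, HasFDerivAt.fderiv (f := fun q : ℝ × EuclideanSpace ℝ (Fin d) => (2 - ‖q.2‖⁻¹) * ⟪q.2, v.2⟫ - 2 * q.1 * v.1) hG]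
  simp only [ContinuousLinearMap.sub_apply, ContinuousLinearMap.add_apply,
    ContinuousLinearMap.smul_apply, ContinuousLinearMap.coe_comp', Function.comp_apply,
    ContinuousLinearMap.coe_snd', ContinuousLinearMap.coe_fst', innerSL_apply_apply, smul_eq_mul,
    ContinuousLinearMap.zero_apply, Pi.sub_apply]
  have h3 : (‖p.2‖ ^ 3)⁻¹ = (‖p.2‖ ^ 2)⁻¹ * ‖p.2‖⁻¹ := by
    rw [← mul_inv]; ring_nf
  rw [h3, real_inner_comm u.2 v.2]
  ring

lemma fderiv_h_eq (h : ℝ × EuclideanSpace ℝ (Fin d) → ℝ)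
    (hdef : ∀ p, h p = (‖p.2‖ - 1/2) ^ 2 - p.1 ^ 2)
    (p : ℝ × EuclideanSpace ℝ (Fin d)) (hp : p.2 ≠ 0) :
    fderiv ℝ h p = Dh d p := (hasFDerivAt_h h hdef p hp).fderiv

lemma fderiv_fderiv_h (h : ℝ × EuclideanSpace ℝ (Fin d) → ℝ)
    (hdef : ∀ p, h p = (‖p.2‖ - 1/2) ^ 2 - p.1 ^ 2)
    (p : ℝ × EuclideanSpace ℝ (Fin d)) (hp : p.2 ≠ 0) (v : ℝ × EuclideanSpace ℝ (Fin d)) :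
    fderiv ℝ (fun q => fderiv ℝ h q v) p = fderiv ℝ (fun q => Dh d q v) p := by
  apply Filter.EventuallyEq.fderiv_eq
  have hU : IsOpen {q : ℝ × EuclideanSpace ℝ (Fin d) | q.2 ≠ 0} :=
    isOpen_compl_singleton.preimage continuous_snd
  filter_upwards [hU.mem_nhds hp] with q hq
  rw [fderiv_h_eq h hdef q hq]


lemma coordDir_zero : coordDir d 0 = ((1 : ℝ), (0 : EuclideanSpace ℝ (Fin d))) :=
  Fin.cons_zero _ _

lemma coordDir_succ (i : Fin d) :
    coordDir d i.succ = ((0 : ℝ), EuclideanSpace.single i 1) := Fin.cons_succ _ _ _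

section eval
variable (h : ℝ × EuclideanSpace ℝ (Fin d) → ℝ)
    (hdef : ∀ p, h p = (‖p.2‖ - 1/2) ^ 2 - p.1 ^ 2)
    (p : ℝ × EuclideanSpace ℝ (Fin d)) (hp : p.2 ≠ 0)
include hdef hp

lemma fderiv_h_zero : fderiv ℝ h p (coordDir d 0) = -(2 * p.1) := by
  rw [fderiv_h_eq h hdef p hp, coordDir_zero, Dh_apply]
  simp

lemma fderiv_h_succ (i : Fin d) :
    fderiv ℝ h p (coordDir d i.succ) = (2 - ‖p.2‖⁻¹) * p.2 i := by
  rw [fderiv_h_eq h hdef p hp, coordDir_succ, Dh_apply]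
  simp [EuclideanSpace.inner_single_right]

lemma hess_zero_zero :
    fderiv ℝ (fun q => fderiv ℝ h q (coordDir d 0)) p (coordDir d 0) = -2 := by
  rw [fderiv_fderiv_h h hdef p hp, fderiv_Dh_apply p hp, coordDir_zero]
  simp

lemma hess_zero_succ (j : Fin d) :
    fderiv ℝ (fun q => fderiv ℝ h q (coordDir d j.succ)) p (coordDir d 0) = 0 := by
  rw [fderiv_fderiv_h h hdef p hp, fderiv_Dh_apply p hp, coordDir_zero, coordDir_succ]
  simp

lemma hess_succ_zero (i : Fin d) :
    fderiv ℝ (fun q => fderiv ℝ h q (coordDir d 0)) p (coordDir d i.succ) = 0 := by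
  rw [fderiv_fderiv_h h hdef p hp, fderiv_Dh_apply p hp, coordDir_zero, coordDir_succ]
  simp

lemma hess_succ_succ (i j : Fin d) :
    fderiv ℝ (fun q => fderiv ℝ h q (coordDir d j.succ)) p (coordDir d i.succ)
      = (‖p.2‖ ^ 3)⁻¹ * p.2 i * p.2 j
        + (2 - ‖p.2‖⁻¹) * (if i = j then 1 else 0) := by
  rw [fderiv_fderiv_h h hdef p hp, fderiv_Dh_apply p hp, coordDir_succ, coordDir_succ]
  simp only [EuclideanSpace.inner_single_right, EuclideanSpace.single_apply, map_one, mul_one,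
    RCLike.inner_apply, starRingEnd_apply, star_trivial]
  rw [show (if j = i then (1:ℝ) else 0) = if i = j then 1 else 0 by simp [eq_comm]]
  ring_nf

end eval

/-- For `h(t,x) = (|x|−1/2)² − t²` and any function `w'` on `{x ≠ 0, h > 0}`:
`Σ_{α,β} ∇^αh ∇^βh (h⁻² ∂_αh ∂_βh − h⁻¹ H_{αβ}) − w' Σ_α ∇^αh ∂_αh = 8 − 4hw'`,
and for `w' = h⁻¹(2 − A₀|x|⁻¹)` with `A₀ > 0` this quantity equals
`4A₀|x|⁻¹ > 0`. -/
theorem pseudoconvexity_weight_identity (d : ℕ) (hd : 1 ≤ d)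
    (h : ℝ × EuclideanSpace ℝ (Fin d) → ℝ)
    (hdef : ∀ p : ℝ × EuclideanSpace ℝ (Fin d), h p = (‖p.2‖ - 1/2) ^ 2 - p.1 ^ 2)
    (w' : ℝ × EuclideanSpace ℝ (Fin d) → ℝ) :
    (∀ p : ℝ × EuclideanSpace ℝ (Fin d), p.2 ≠ 0 → 0 < h p →
      (∑ α : Fin (d + 1), ∑ β : Fin (d + 1),
          (mSign d α * fderiv ℝ h p (coordDir d α))
            * (mSign d β * fderiv ℝ h p (coordDir d β))
            * ((h p)⁻¹ ^ 2 * fderiv ℝ h p (coordDir d α) * fderiv ℝ h p (coordDir d β)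
              - (h p)⁻¹ * fderiv ℝ (fun q => fderiv ℝ h q (coordDir d β)) p (coordDir d α)))
        - w' p * ∑ α : Fin (d + 1),
            (mSign d α * fderiv ℝ h p (coordDir d α)) * fderiv ℝ h p (coordDir d α)
      = 8 - 4 * h p * w' p)
    ∧
    (∀ A₀ : ℝ, 0 < A₀ →
      (∀ p : ℝ × EuclideanSpace ℝ (Fin d), p.2 ≠ 0 → 0 < h p →
        w' p = (h p)⁻¹ * (2 - A₀ * ‖p.2‖⁻¹)) →
      ∀ p : ℝ × EuclideanSpace ℝ (Fin d), p.2 ≠ 0 → 0 < h p →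
        (∑ α : Fin (d + 1), ∑ β : Fin (d + 1),
            (mSign d α * fderiv ℝ h p (coordDir d α))
              * (mSign d β * fderiv ℝ h p (coordDir d β))
              * ((h p)⁻¹ ^ 2 * fderiv ℝ h p (coordDir d α) * fderiv ℝ h p (coordDir d β)
                - (h p)⁻¹ * fderiv ℝ (fun q => fderiv ℝ h q (coordDir d β)) p (coordDir d α)))
          - w' p * ∑ α : Fin (d + 1),
              (mSign d α * fderiv ℝ h p (coordDir d α)) * fderiv ℝ h p (coordDir d α)
        = 4 * A₀ * ‖p.2‖⁻¹ ∧ 0 < 4 * A₀ * ‖p.2‖⁻¹) := by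
  have key : ∀ p : ℝ × EuclideanSpace ℝ (Fin d), p.2 ≠ 0 → 0 < h p →
      (∑ α : Fin (d + 1), ∑ β : Fin (d + 1),
          (mSign d α * fderiv ℝ h p (coordDir d α))
            * (mSign d β * fderiv ℝ h p (coordDir d β))
            * ((h p)⁻¹ ^ 2 * fderiv ℝ h p (coordDir d α) * fderiv ℝ h p (coordDir d β)
              - (h p)⁻¹ * fderiv ℝ (fun q => fderiv ℝ h q (coordDir d β)) p (coordDir d α)))
        - w' p * ∑ α : Fin (d + 1),
            (mSign d α * fderiv ℝ h p (coordDir d α)) * fderiv ℝ h p (coordDir d α)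
      = 8 - 4 * h p * w' p := by
    intro p hp2 hpos
    have hr : ‖p.2‖ ≠ 0 := norm_ne_zero_iff.2 hp2
    have hu : h p ≠ 0 := ne_of_gt hpos
    have hS : ∑ i, p.2 i * p.2 i = ‖p.2‖ ^ 2 := by
      rw [← real_inner_self_eq_norm_sq]
      simp only [PiLp.inner_apply, RCLike.inner_apply, conj_trivial]
    simp only [Fin.sum_univ_succ, mSign, Fin.cons_zero, Fin.cons_succ,
      fderiv_h_zero h hdef p hp2, fderiv_h_succ h hdef p hp2,
      hess_zero_zero h hdef p hp2, hess_zero_succ h hdef p hp2,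
      hess_succ_zero h hdef p hp2, hess_succ_succ h hdef p hp2]
    have hin : ∀ i : Fin d,
        (∑ j : Fin d,
          1 * ((2 - ‖p.2‖⁻¹) * p.2 i) * (1 * ((2 - ‖p.2‖⁻¹) * p.2 j)) *
            ((h p)⁻¹ ^ 2 * ((2 - ‖p.2‖⁻¹) * p.2 i) * ((2 - ‖p.2‖⁻¹) * p.2 j) -
              (h p)⁻¹ * ((‖p.2‖ ^ 3)⁻¹ * p.2 i * p.2 j + (2 - ‖p.2‖⁻¹) * if i = j then 1 else 0)))
        = (2 - ‖p.2‖⁻¹) ^ 2 * ((h p)⁻¹ ^ 2 * (2 - ‖p.2‖⁻¹) ^ 2 - (h p)⁻¹ * (‖p.2‖ ^ 3)⁻¹)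
            * (p.2 i * p.2 i) * ‖p.2‖ ^ 2
          - (h p)⁻¹ * (2 - ‖p.2‖⁻¹) ^ 3 * (p.2 i * p.2 i) := by
      intro i
      have hterm : ∀ j : Fin d,
          1 * ((2 - ‖p.2‖⁻¹) * p.2 i) * (1 * ((2 - ‖p.2‖⁻¹) * p.2 j)) *
            ((h p)⁻¹ ^ 2 * ((2 - ‖p.2‖⁻¹) * p.2 i) * ((2 - ‖p.2‖⁻¹) * p.2 j) -
              (h p)⁻¹ * ((‖p.2‖ ^ 3)⁻¹ * p.2 i * p.2 j + (2 - ‖p.2‖⁻¹) * if i = j then 1 else 0))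
          = (2 - ‖p.2‖⁻¹) ^ 2 * ((h p)⁻¹ ^ 2 * (2 - ‖p.2‖⁻¹) ^ 2 - (h p)⁻¹ * (‖p.2‖ ^ 3)⁻¹)
              * (p.2 i * p.2 i) * (p.2 j * p.2 j)
            - (if i = j then (h p)⁻¹ * (2 - ‖p.2‖⁻¹) ^ 3 * (p.2 i * p.2 i) else 0) := by
        intro j
        by_cases hij : i = j
        · subst hij; simp only [eq_self_iff_true, if_true]; ring
        · simp only [if_neg hij]; ring
      rw [Finset.sum_congr rfl fun j _ => hterm j, Finset.sum_sub_distrib]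
      congr 1
      · rw [← hS, Finset.mul_sum]
      · simp
    simp only [hin]
    have hsum : ∀ K : ℝ, ∑ j : Fin d, K * (p.2 j * p.2 j) = K * ‖p.2‖ ^ 2 := fun K => by
      rw [← hS, Finset.mul_sum]
    have hS1 : (∑ j : Fin d,
        -1 * -(2 * p.1) * (1 * ((2 - ‖p.2‖⁻¹) * p.2 j)) *
          ((h p)⁻¹ ^ 2 * -(2 * p.1) * ((2 - ‖p.2‖⁻¹) * p.2 j) - (h p)⁻¹ * 0))
        = (-(4 * p.1 ^ 2) * (h p)⁻¹ ^ 2 * (2 - ‖p.2‖⁻¹) ^ 2) * ‖p.2‖ ^ 2 := by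
      rw [← hsum (-(4 * p.1 ^ 2) * (h p)⁻¹ ^ 2 * (2 - ‖p.2‖⁻¹) ^ 2)]
      exact Finset.sum_congr rfl fun j _ => by ring
    have hS2 : (∑ i : Fin d,
        (1 * ((2 - ‖p.2‖⁻¹) * p.2 i) * (-1 * -(2 * p.1)) *
            ((h p)⁻¹ ^ 2 * ((2 - ‖p.2‖⁻¹) * p.2 i) * -(2 * p.1) - (h p)⁻¹ * 0) +
          ((2 - ‖p.2‖⁻¹) ^ 2 * ((h p)⁻¹ ^ 2 * (2 - ‖p.2‖⁻¹) ^ 2 - (h p)⁻¹ * (‖p.2‖ ^ 3)⁻¹)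
              * (p.2 i * p.2 i) * ‖p.2‖ ^ 2
            - (h p)⁻¹ * (2 - ‖p.2‖⁻¹) ^ 3 * (p.2 i * p.2 i))))
        = ((-(4 * p.1 ^ 2) * (h p)⁻¹ ^ 2 * (2 - ‖p.2‖⁻¹) ^ 2)
            + (2 - ‖p.2‖⁻¹) ^ 2 * ((h p)⁻¹ ^ 2 * (2 - ‖p.2‖⁻¹) ^ 2 - (h p)⁻¹ * (‖p.2‖ ^ 3)⁻¹)
                * ‖p.2‖ ^ 2
            - (h p)⁻¹ * (2 - ‖p.2‖⁻¹) ^ 3) * ‖p.2‖ ^ 2 := by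
      rw [← hsum ((-(4 * p.1 ^ 2) * (h p)⁻¹ ^ 2 * (2 - ‖p.2‖⁻¹) ^ 2)
            + (2 - ‖p.2‖⁻¹) ^ 2 * ((h p)⁻¹ ^ 2 * (2 - ‖p.2‖⁻¹) ^ 2 - (h p)⁻¹ * (‖p.2‖ ^ 3)⁻¹)
                * ‖p.2‖ ^ 2
            - (h p)⁻¹ * (2 - ‖p.2‖⁻¹) ^ 3)]
      exact Finset.sum_congr rfl fun i _ => by ring
    have hS3 : (∑ i : Fin d, 1 * ((2 - ‖p.2‖⁻¹) * p.2 i) * ((2 - ‖p.2‖⁻¹) * p.2 i))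
        = (2 - ‖p.2‖⁻¹) ^ 2 * ‖p.2‖ ^ 2 := by
      rw [← hsum ((2 - ‖p.2‖⁻¹) ^ 2)]
      exact Finset.sum_congr rfl fun i _ => by ring
    rw [hS1, hS2, hS3]
    field_simp
    rw [hdef p]
    ring
  constructor
  · exact key
  · intro A₀ hA hw p hp2 hpos
    have hr : (0:ℝ) < ‖p.2‖ := norm_pos_iff.2 hp2
    have hu : h p ≠ 0 := ne_of_gt hpos
    constructor
    · rw [key p hp2 hpos, hw p hp2 hpos]
      field_simp
      ring
    · positivity
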